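/- Let α ≥ 0, β ≥ 0, γ ∈ ℂ with α + β > 0, and d > 0. A number λ = -k² with k > 0 is an eigenvalue of the operator H_{A,d} = -d²/dx² on (-d,0) ∪ (0,d) with Neumann conditions at ±d and the interface conditions (A.1) at 0 if and only if g(k) = h(k)·j(k), where g(k) = |γ|²·k·(1 - e^{4kd}), h(k) = (-2α - 4k)e^{-2kd} - 2α + 4k, and j(k) = e^{2kd}(1 + (β/2)k) + e^{4kd}(1 - (β/2)k). -/

import Mathlib

open Real Set

lemma hasDerivAt_cexp_mul (c : ℂ) (x : ℝ) :
    HasDerivAt (fun t : ℝ => Complex.exp (c * t)) (c * Complex.exp (c * x)) x := by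
  have h : HasDerivAt (fun z : ℂ => Complex.exp (c * z)) (c * Complex.exp (c * (x:ℂ))) (x:ℂ) := by
    have h0 := (Complex.hasDerivAt_exp (c * x)).comp (x:ℂ) ((hasDerivAt_id (x:ℂ)).const_mul c)
    exact h0.congr_deriv (by ring)
  exact h.comp_ofReal

lemma cexp_contDiff (c : ℂ) : ContDiff ℝ 2 (fun t : ℝ => Complex.exp (c * t)) := by
  have h1 : ContDiff ℝ 2 (fun t : ℝ => c * (t:ℂ)) :=
    contDiff_const.mul Complex.ofRealCLM.contDiff
  exact ((Complex.contDiff_exp : ContDiff ℂ 2 Complex.exp).restrict_scalars ℝ).comp h1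

lemma fam_hasDerivAt (p q c : ℂ) (x : ℝ) :
    HasDerivAt (fun t : ℝ => p * Complex.exp (c*t) + q * Complex.exp (-c*t))
      ((p*c) * Complex.exp (c*x) + (-(q*c)) * Complex.exp (-c*x)) x := by
  have h1 := (hasDerivAt_cexp_mul c x).const_mul p
  have h2 := (hasDerivAt_cexp_mul (-c) x).const_mul q
  refine (h1.add h2).congr_deriv ?_
  ring

lemma fam_deriv (p q c : ℂ) :
    deriv (fun t : ℝ => p * Complex.exp (c*t) + q * Complex.exp (-c*t))
      = fun t : ℝ => (p*c) * Complex.exp (c*t) + (-(q*c)) * Complex.exp (-c*t) :=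
  funext fun x => (fam_hasDerivAt p q c x).deriv

lemma combo_const (f : ℝ → ℂ) (hf : ContDiff ℝ 2 f) (k : ℝ) (c : ℂ) (hc : c^2 = (k:ℂ)^2)
    (A B : ℝ) (hode : ∀ x ∈ Icc A B, deriv (deriv f) x = (k:ℂ)^2 * f x) :
    ∀ x ∈ Icc A B, Complex.exp (c*x) * (deriv f x - c * f x)
      = Complex.exp (c*A) * (deriv f A - c * f A) := by
  have hdf : Differentiable ℝ f := hf.differentiable two_ne_zero
  have hdf2 : Differentiable ℝ (deriv f) := by
    have h2 : ContDiff ℝ ((1:ℕ)+1) f := by exact_mod_cast hf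
    exact ((contDiff_succ_iff_deriv.mp h2).2.2).differentiable (by norm_num)
  apply constant_of_has_deriv_right_zero
  · apply Continuous.continuousOn
    exact ((Complex.continuous_exp.comp (continuous_const.mul Complex.continuous_ofReal)).mul
      ((hf.continuous_deriv one_le_two).sub (continuous_const.mul hf.continuous)))
  · intro x hx
    have h1 : HasDerivAt f (deriv f x) x := (hdf x).hasDerivAt
    have h2 : HasDerivAt (deriv f) (deriv (deriv f) x) x := (hdf2 x).hasDerivAt
    have he := hasDerivAt_cexp_mul c x
    have hmul := he.mul (h2.sub (h1.const_mul c))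
    have hzero : (c * Complex.exp (c*x)) * (deriv f x - c * f x)
        + Complex.exp (c*x) * (deriv (deriv f) x - c * deriv f x) = 0 := by
      rw [hode x (Ico_subset_Icc_self hx), ← hc]; ring
    simp only [Pi.sub_apply] at hmul
    rw [hzero] at hmul
    exact hmul.hasDerivWithinAt

lemma bridge (α β g2 k d : ℝ) :
    ((k*(Real.exp (k*d) - Real.exp (-(k*d))) - α/2*(Real.exp (k*d) + Real.exp (-(k*d))))
        * ((Real.exp (k*d) + Real.exp (-(k*d))) - β/2*(k*(Real.exp (k*d) - Real.exp (-(k*d)))))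
      + g2/4*(k*(Real.exp (k*d) - Real.exp (-(k*d))))*(Real.exp (k*d) + Real.exp (-(k*d))) = 0)
    ↔ g2 * k * (1 - Real.exp (4*k*d))
        = ((-2*α - 4*k) * Real.exp (-2*k*d) - 2*α + 4*k)
          * (Real.exp (2*k*d) * (1 + β/2*k) + Real.exp (4*k*d) * (1 - β/2*k)) := by
  set E := Real.exp (k*d) with hEdef
  set F := Real.exp (-(k*d)) with hFdef
  have hEF : E * F = 1 := by rw [hEdef, hFdef, ← Real.exp_add]; simp
  have hE : 0 < E := Real.exp_pos _
  have h4 : Real.exp (4*k*d) = E^4 := by rw [hEdef, ← Real.exp_nat_mul]; ring_nf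
  have h2 : Real.exp (2*k*d) = E^2 := by rw [hEdef, ← Real.exp_nat_mul]; ring_nf
  have hm2 : Real.exp (-2*k*d) = F^2 := by rw [hFdef, ← Real.exp_nat_mul]; ring_nf
  rw [h4, h2, hm2]
  constructor
  · intro h
    linear_combination (-4*E^2) * h +
      (-g2*k - E*F*g2*k + 4*E^2*k + 2*E^2*β*k^2 - 2*E^2*α - E^2*α*β*k
        + 4*E^3*F*k - 2*E^3*F*β*k^2 + 2*E^3*F*α - E^3*F*α*β*k) * hEF
  · intro h
    have h2 : ((k*(E-F) - α/2*(E+F)) * ((E+F) - β/2*(k*(E-F)))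
        + g2/4*(k*(E-F))*(E+F)) * (4*E^2) = 0 := by
      linear_combination (-1) * h +
        (-g2*k - E*F*g2*k + 4*E^2*k + 2*E^2*β*k^2 - 2*E^2*α - E^2*α*β*k
          + 4*E^3*F*k - 2*E^3*F*β*k^2 + 2*E^3*F*α - E^3*F*α*β*k) * hEF
    exact (mul_eq_zero.mp h2).resolve_right (by positivity)

theorem stmt19 (α β d : ℝ) (γ : ℂ) (hα : 0 ≤ α) (hβ : 0 ≤ β) (hαβ : 0 < α + β)
    (hd : 0 < d) (k : ℝ) (hk : 0 < k) :
    (∃ ψm ψp : ℝ → ℂ, ContDiff ℝ 2 ψm ∧ ContDiff ℝ 2 ψp ∧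
      (¬(∀ x ∈ Set.Icc (-d) 0, ψm x = 0) ∨ ¬(∀ x ∈ Set.Icc 0 d, ψp x = 0)) ∧
      (∀ x ∈ Set.Icc (-d) 0, -(deriv (deriv ψm) x) = -(k:ℂ)^2 * ψm x) ∧
      (∀ x ∈ Set.Icc 0 d, -(deriv (deriv ψp) x) = -(k:ℂ)^2 * ψp x) ∧
      deriv ψm 0 - deriv ψp 0
        = (α:ℂ)/2 * (ψm 0 + ψp 0) + γ/2 * (deriv ψm 0 + deriv ψp 0) ∧
      ψm 0 - ψp 0
        = -(starRingEnd ℂ γ)/2 * (ψm 0 + ψp 0) + (β:ℂ)/2 * (deriv ψm 0 + deriv ψp 0) ∧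
      deriv ψm (-d) = 0 ∧ deriv ψp d = 0)
    ↔ ‖γ‖ ^ 2 * k * (1 - Real.exp (4*k*d))
        = ((-2*α - 4*k) * Real.exp (-2*k*d) - 2*α + 4*k)
          * (Real.exp (2*k*d) * (1 + β/2*k) + Real.exp (4*k*d) * (1 - β/2*k)) := by
  rw [← bridge α β (‖γ‖ ^ 2) k d]
  set Er := Real.exp (k*d) with hErdef
  set Fr := Real.exp (-(k*d)) with hFrdef
  have hEr : 0 < Er := Real.exp_pos _
  have hFr : 0 < Fr := Real.exp_pos _
  have hErFr : Fr < Er := by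
    rw [hErdef, hFrdef]; exact Real.exp_lt_exp.mpr (by nlinarith)
  have hsR : 0 < k * (Er - Fr) := by nlinarith
  have htR : 0 < Er + Fr := by linarith
  have hk0 : (k:ℂ) ≠ 0 := by exact_mod_cast hk.ne'
  -- complex exponentials
  have hEc : Complex.exp ((k:ℂ)*(d:ℂ)) = (Er:ℂ) := by
    rw [hErdef]; push_cast [Complex.ofReal_exp]; ring_nf
  have hFc : Complex.exp (-((k:ℂ)*(d:ℂ))) = (Fr:ℂ) := by
    rw [hFrdef]; push_cast [Complex.ofReal_exp]; ring_nf
  set σ : ℂ := ((k * (Er - Fr) : ℝ) : ℂ) with hσdef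
  set τ : ℂ := ((Er + Fr : ℝ) : ℂ) with hτdef
  have hσ0 : σ ≠ 0 := by rw [hσdef]; exact_mod_cast hsR.ne'
  have hτ0 : τ ≠ 0 := by rw [hτdef]; exact_mod_cast htR.ne'
  have hγc : γ * (starRingEnd ℂ) γ = ((‖γ‖ ^ 2 : ℝ) : ℂ) := by
    rw [Complex.mul_conj, Complex.sq_norm]
  constructor
  · -- forward
    rintro ⟨ψm, ψp, hcm, hcp, hnt, hodem', hodep', hi1, hi2, hNm, hNp⟩
    have hodem : ∀ x ∈ Icc (-d) 0, deriv (deriv ψm) x = (k:ℂ)^2 * ψm x := by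
      intro x hx; have := hodem' x hx; linear_combination -this
    have hodep : ∀ x ∈ Icc 0 d, deriv (deriv ψp) x = (k:ℂ)^2 * ψp x := by
      intro x hx; have := hodep' x hx; linear_combination -this
    have hm1 := combo_const ψm hcm k (k:ℂ) rfl (-d) 0 hodem
    have hm2 := combo_const ψm hcm k (-(k:ℂ)) (by ring) (-d) 0 hodem
    have hp1 := combo_const ψp hcp k (k:ℂ) rfl 0 d hodep
    have hp2 := combo_const ψp hcp k (-(k:ℂ)) (by ring) 0 d hodep
    set a := ψm (-d) with hadef
    set b := ψp d with hbdef
    have hmem0 : (0:ℝ) ∈ Icc (-d) 0 := ⟨by linarith, le_refl 0⟩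
    have hmemd : d ∈ Icc 0 d := ⟨le_of_lt hd, le_refl d⟩
    -- equations at 0 for ψm
    have em1 : deriv ψm 0 - (k:ℂ) * ψm 0 = (Fr:ℂ) * (-((k:ℂ) * a)) := by
      have h := hm1 0 hmem0
      simp only [Complex.ofReal_zero, mul_zero, Complex.exp_zero, one_mul,
        Complex.ofReal_neg, mul_neg, hNm, zero_sub] at h
      rw [h, hFc]; ring
    have em2 : deriv ψm 0 + (k:ℂ) * ψm 0 = (Er:ℂ) * ((k:ℂ) * a) := by
      have h := hm2 0 hmem0
      simp only [Complex.ofReal_zero, mul_zero, Complex.exp_zero, one_mul,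
        Complex.ofReal_neg, mul_neg, neg_mul, neg_neg, hNm, zero_sub] at h
      rw [hEc] at h
      linear_combination h
    -- equations at 0 for ψp  (constant equals value at left endpoint 0, evaluate at d)
    have ep1 : deriv ψp 0 - (k:ℂ) * ψp 0 = (Er:ℂ) * (-((k:ℂ) * b)) := by
      have h := hp1 d hmemd
      simp only [Complex.ofReal_zero, mul_zero, Complex.exp_zero, one_mul, hNp, zero_sub] at h
      rw [hEc] at h
      linear_combination -h
    have ep2 : deriv ψp 0 + (k:ℂ) * ψp 0 = (Fr:ℂ) * ((k:ℂ) * b) := by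
      have h := hp2 d hmemd
      simp only [Complex.ofReal_zero, mul_zero, Complex.exp_zero, one_mul, neg_mul,
        neg_neg, hNp, zero_sub] at h
      rw [hFc] at h
      linear_combination -h
    -- values
    have hPm : ψm 0 = a * τ / 2 := by
      have hcan : (2*(k:ℂ)) * ψm 0 = (2*(k:ℂ)) * (a * τ / 2) := by
        rw [hτdef]; push_cast; linear_combination em2 - em1
      exact mul_left_cancel₀ (by simpa using hk0) hcan
    have hDm : deriv ψm 0 = a * σ / 2 := by
      have hcan : (2:ℂ) * deriv ψm 0 = (2:ℂ) * (a * σ / 2) := by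
        rw [hσdef]; push_cast; linear_combination em1 + em2
      exact mul_left_cancel₀ two_ne_zero hcan
    have hPp : ψp 0 = b * τ / 2 := by
      have hcan : (2*(k:ℂ)) * ψp 0 = (2*(k:ℂ)) * (b * τ / 2) := by
        rw [hτdef]; push_cast; linear_combination ep2 - ep1
      exact mul_left_cancel₀ (by simpa using hk0) hcan
    have hDp : deriv ψp 0 = -(b * σ) / 2 := by
      have hcan : (2:ℂ) * deriv ψp 0 = (2:ℂ) * (-(b * σ) / 2) := by
        rw [hσdef]; push_cast; linear_combination ep1 + ep2
      exact mul_left_cancel₀ two_ne_zero hcan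
    -- nontriviality gives (a,b) ≠ 0
    have hab : a ≠ 0 ∨ b ≠ 0 := by
      by_contra hcon
      push_neg at hcon
      obtain ⟨ha0, hb0⟩ := hcon
      rcases hnt with hnt | hnt
      · apply hnt
        intro x hx
        have f1 : deriv ψm x - (k:ℂ) * ψm x = 0 := by
          have h := hm1 x hx
          rw [hNm, ha0] at h
          have h' : Complex.exp ((k:ℂ)*x) * (deriv ψm x - (k:ℂ) * ψm x) = 0 := by
            rw [h]; ring
          exact (mul_eq_zero.mp h').resolve_left (Complex.exp_ne_zero _)
        have f2 : deriv ψm x + (k:ℂ) * ψm x = 0 := by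
          have h := hm2 x hx
          rw [hNm, ha0] at h
          have h' : Complex.exp (-(k:ℂ)*x) * (deriv ψm x + (k:ℂ) * ψm x) = 0 := by
            rw [show deriv ψm x + (k:ℂ) * ψm x = deriv ψm x - -(k:ℂ) * ψm x by ring, h]; ring
          exact (mul_eq_zero.mp h').resolve_left (Complex.exp_ne_zero _)
        have : (2*(k:ℂ)) * ψm x = 0 := by linear_combination f2 - f1
        rcases mul_eq_zero.mp this with h | h
        · exact absurd h (by simpa using hk0)
        · exact h
      · apply hnt
        intro x hx
        have hv0 : deriv ψp 0 - (k:ℂ) * ψp 0 = 0 := by rw [ep1, hb0]; ring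
        have hw0 : deriv ψp 0 + (k:ℂ) * ψp 0 = 0 := by rw [ep2, hb0]; ring
        have f1 : deriv ψp x - (k:ℂ) * ψp x = 0 := by
          have h := hp1 x hx
          have h' : Complex.exp ((k:ℂ)*x) * (deriv ψp x - (k:ℂ) * ψp x) = 0 := by
            rw [h]
            simp only [Complex.ofReal_zero, mul_zero, Complex.exp_zero, one_mul]
            exact hv0
          exact (mul_eq_zero.mp h').resolve_left (Complex.exp_ne_zero _)
        have f2 : deriv ψp x + (k:ℂ) * ψp x = 0 := by
          have h := hp2 x hx
          have h' : Complex.exp (-(k:ℂ)*x) * (deriv ψp x + (k:ℂ) * ψp x) = 0 := by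
            rw [show deriv ψp x + (k:ℂ) * ψp x = deriv ψp x - -(k:ℂ) * ψp x by ring, h]
            simp only [Complex.ofReal_zero, mul_zero, Complex.exp_zero, one_mul]
            linear_combination hw0
          exact (mul_eq_zero.mp h').resolve_left (Complex.exp_ne_zero _)
        have : (2*(k:ℂ)) * ψp x = 0 := by linear_combination f2 - f1
        rcases mul_eq_zero.mp this with h | h
        · exact absurd h (by simpa using hk0)
        · exact h
    -- interface equations in a,b
    rw [hPm, hDm, hPp, hDp] at hi1 hi2
    have hE1 : (σ - (α:ℂ)/2 * τ) * (a+b) = (γ/2) * σ * (a-b) := by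
      linear_combination 2 * hi1
    have hE2 : (τ - (β:ℂ)/2 * σ) * (a-b) = -((starRingEnd ℂ γ)/2) * τ * (a+b) := by
      linear_combination 2 * hi2
    -- determinant is zero
    have hD : (σ - (α:ℂ)/2*τ)*(τ - (β:ℂ)/2*σ) + (γ * (starRingEnd ℂ γ)/4)*σ*τ = 0 := by
      have huv : a + b ≠ 0 ∨ a - b ≠ 0 := by
        rcases hab with h | h
        · by_contra hc; push_neg at hc; apply h
          have := hc.1; have := hc.2
          linear_combination (hc.1 + hc.2) / 2
        · by_contra hc; push_neg at hc; apply h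
          linear_combination (hc.1 - hc.2) / 2
      rcases huv with h | h
      · have : ((σ - (α:ℂ)/2*τ)*(τ - (β:ℂ)/2*σ) + (γ * (starRingEnd ℂ γ)/4)*σ*τ) * (a+b) = 0 := by
          linear_combination (τ - (β:ℂ)/2*σ) * hE1 + (γ/2)*σ * hE2
        exact (mul_eq_zero.mp this).resolve_right h
      · have : ((σ - (α:ℂ)/2*τ)*(τ - (β:ℂ)/2*σ) + (γ * (starRingEnd ℂ γ)/4)*σ*τ) * (a-b) = 0 := by
          linear_combination (σ - (α:ℂ)/2*τ) * hE2 - (starRingEnd ℂ γ/2)*τ * hE1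
        exact (mul_eq_zero.mp this).resolve_right h
    -- convert to real equation
    have hcast : ((( (k*(Er-Fr)) - α/2*(Er+Fr)) * ((Er+Fr) - β/2*(k*(Er-Fr)))
        + (‖γ‖^2)/4*(k*(Er-Fr))*(Er+Fr) : ℝ) : ℂ) = 0 := by
      rw [hγc, hσdef, hτdef] at hD
      push_cast at hD ⊢
      linear_combination hD
    exact_mod_cast hcast
  · -- backward
    intro hX4
    have hD : (σ - (α:ℂ)/2*τ)*(τ - (β:ℂ)/2*σ) + (γ * (starRingEnd ℂ γ)/4)*σ*τ = 0 := by
      rw [hγc, hσdef, hτdef]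
      have h2 : (((k*(Er-Fr) - α/2*(Er+Fr)) * ((Er+Fr) - β/2*(k*(Er-Fr)))
          + (‖γ‖^2)/4*(k*(Er-Fr))*(Er+Fr) : ℝ) : ℂ) = 0 := by
        exact_mod_cast hX4
      push_cast at h2 ⊢
      linear_combination h2
    obtain ⟨u, v, huv0, heq1, heq2⟩ :
        ∃ u v : ℂ, ¬(u = 0 ∧ v = 0) ∧
          (σ - (α:ℂ)/2*τ) * u = (γ/2)*σ*v ∧
          (τ - (β:ℂ)/2*σ) * v = -((starRingEnd ℂ γ)/2)*τ*u := by
      by_cases hc : σ - (α:ℂ)/2*τ = 0 ∧ γ = 0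
      · refine ⟨1, 0, by simp, by rw [hc.1]; simp, by rw [hc.2]; simp⟩
      · refine ⟨(γ/2)*σ, σ - (α:ℂ)/2*τ, ?_, by ring, by linear_combination hD⟩
        intro hcon
        obtain ⟨h1, h2⟩ := hcon
        apply hc
        refine ⟨h2, ?_⟩
        rcases mul_eq_zero.mp h1 with h | h
        · field_simp at h; simpa using h
        · exact absurd h hσ0
    have hFc' : Complex.exp ((k:ℂ)*((-d:ℝ):ℂ)) = (Fr:ℂ) := by
      rw [← hFc]; congr 1; push_cast; ring
    have hEc' : Complex.exp (-(k:ℂ)*((-d:ℝ):ℂ)) = (Er:ℂ) := by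
      rw [← hEc]; congr 1; push_cast; ring
    have hFc'' : Complex.exp (-(k:ℂ)*((d:ℝ):ℂ)) = (Fr:ℂ) := by
      rw [← hFc]; congr 1; push_cast; ring
    have hσc : (k:ℂ)*((Er:ℂ) - (Fr:ℂ)) = σ := by rw [hσdef]; push_cast; ring
    have hτc : (Er:ℂ) + (Fr:ℂ) = τ := by rw [hτdef]; push_cast; ring
    refine ⟨fun t : ℝ => ((u+v)*(Er:ℂ)/2) * Complex.exp ((k:ℂ)*t)
              + ((u+v)*(Fr:ℂ)/2) * Complex.exp (-(k:ℂ)*t),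
            fun t : ℝ => ((u-v)*(Fr:ℂ)/2) * Complex.exp ((k:ℂ)*t)
              + ((u-v)*(Er:ℂ)/2) * Complex.exp (-(k:ℂ)*t),
            ?_, ?_, ?_, ?_, ?_, ?_, ?_, ?_, ?_⟩
    · exact (contDiff_const.mul (cexp_contDiff (k:ℂ))).add
        (contDiff_const.mul (cexp_contDiff (-(k:ℂ))))
    · exact (contDiff_const.mul (cexp_contDiff (k:ℂ))).add
        (contDiff_const.mul (cexp_contDiff (-(k:ℂ))))
    · -- nontriviality
      have hab : u + v ≠ 0 ∨ u - v ≠ 0 := by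
        by_contra hcon
        push_neg at hcon
        exact huv0 ⟨by linear_combination (hcon.1 + hcon.2)/2,
                    by linear_combination (hcon.1 - hcon.2)/2⟩
      rcases hab with h | h
      · left
        intro hall
        have h0 := hall 0 ⟨by linarith, le_refl 0⟩
        simp only [Complex.ofReal_zero, mul_zero, neg_zero, Complex.exp_zero, mul_one] at h0
        have h1 : (u + v) * τ = 0 := by
          rw [← hτc]; linear_combination 2 * h0
        exact h ((mul_eq_zero.mp h1).resolve_right hτ0)
      · right
        intro hall
        have h0 := hall 0 ⟨le_refl 0, le_of_lt hd⟩
        simp only [Complex.ofReal_zero, mul_zero, neg_zero, Complex.exp_zero, mul_one] at h0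
        have h1 : (u - v) * τ = 0 := by
          rw [← hτc]; linear_combination 2 * h0
        exact h ((mul_eq_zero.mp h1).resolve_right hτ0)
    · -- ODE minus
      intro x hx
      rw [fam_deriv, fam_deriv]
      ring
    · -- ODE plus
      intro x hx
      rw [fam_deriv, fam_deriv]
      ring
    · -- interface 1
      rw [fam_deriv, fam_deriv]
      simp only [Complex.ofReal_zero, mul_zero, neg_zero, Complex.exp_zero, mul_one]
      linear_combination heq1 + (u - γ/2*v) * hσc + (-(α:ℂ)/2*u) * hτc
    · -- interface 2
      simp only [fam_deriv]
      simp only [Complex.ofReal_zero, mul_zero, neg_zero, Complex.exp_zero, mul_one]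
      linear_combination heq2 + (v + (starRingEnd ℂ γ)/2*u) * hτc + (-(β:ℂ)/2*v) * hσc
    · -- Neumann -d
      rw [(fam_hasDerivAt _ _ _ (-d)).deriv]
      rw [hFc', hEc']
      ring
    · -- Neumann d
      rw [(fam_hasDerivAt _ _ _ d).deriv]
      rw [hEc, hFc'']
      ring
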